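/- Let A ∈ ℝ^{m×n}, let S = {U₀,…,U_{s−1}} be a partition of {1,…,m} into s blocks such that σ_max(A_{U,:})² ≤ β_A for every U ∈ S, and assume σ_min(A) > 0. If one step of the block Kaczmarz method picks U uniformly at random from S and sets Y⁺ = Y + A_{U,:}†(F_{U,:} − A_{U,:} Y), where F = A Y* and every column of Y − Y* lies in the column space of Aᵀ, then E‖Y⁺ − Y*‖_F² ≤ (1 − σ_min(A)²/(s β_A)) ‖Y − Y*‖_F². -/

import Mathlib

open Matrix Finset Filter

/-- Squared Frobenius norm of a real matrix. -/
noncomputable def frobSq {α β : Type*} [Fintype α] [Fintype β] (M : Matrix α β ℝ) : ℝ :=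
  ∑ i, ∑ j, (M i j) ^ 2

/-- Square of the smallest singular value of a real matrix. -/
noncomputable def sigMinSq {m n : ℕ} (A : Matrix (Fin m) (Fin n) ℝ) : ℝ :=
  sInf {c : ℝ | ∃ v : Fin n → ℝ, (∑ j, (v j) ^ 2) = 1 ∧ c = ∑ i, (A.mulVec v i) ^ 2}

/-- Square of the largest singular value of a real matrix. -/
noncomputable def sigMaxSq {m n : ℕ} (A : Matrix (Fin m) (Fin n) ℝ) : ℝ :=
  sSup {c : ℝ | ∃ v : Fin n → ℝ, (∑ j, (v j) ^ 2) = 1 ∧ c = ∑ i, (A.mulVec v i) ^ 2}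

/-- `P` is the Moore–Penrose pseudoinverse of `M` (the four Penrose conditions). -/
def IsMPInv {α β : Type*} [Fintype α] [Fintype β] (M : Matrix α β ℝ) (P : Matrix β α ℝ) : Prop :=
  M * P * M = M ∧ P * M * P = P ∧ (M * P)ᵀ = M * P ∧ (P * M)ᵀ = P * M

/-- Row submatrix `A_{U,:}`. -/
def rowBlock {m n : ℕ} (A : Matrix (Fin m) (Fin n) ℝ) (U : Finset (Fin m)) :
    Matrix {i // i ∈ U} (Fin n) ℝ := A.submatrix (fun i => (i : Fin m)) id

/-- Column submatrix `B_{:,V}`. -/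
def colBlock {p q : ℕ} (B : Matrix (Fin p) (Fin q) ℝ) (V : Finset (Fin q)) :
    Matrix (Fin p) {j // j ∈ V} ℝ := B.submatrix id (fun j => (j : Fin q))

lemma frobSq_eq_trace {α β : Type*} [Fintype α] [Fintype β] [DecidableEq β]
    (M : Matrix α β ℝ) : frobSq M = Matrix.trace (Mᵀ * M) := by
  simp only [frobSq, Matrix.trace, Matrix.diag, Matrix.mul_apply, Matrix.transpose_apply, sq]
  exact Finset.sum_comm

lemma frobSq_nonneg {α β : Type*} [Fintype α] [Fintype β] (M : Matrix α β ℝ) :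
    0 ≤ frobSq M := by
  apply Finset.sum_nonneg; intro i _; apply Finset.sum_nonneg; intro j _; positivity

lemma frobSq_proj {n q : ℕ} (Q : Matrix (Fin n) (Fin n) ℝ) (hsym : Qᵀ = Q)
    (hid : Q * Q = Q) (E : Matrix (Fin n) (Fin q) ℝ) :
    frobSq (E - Q * E) = frobSq E - frobSq (Q * E) := by
  rw [frobSq_eq_trace, frobSq_eq_trace, frobSq_eq_trace]
  have hQ1 : (Q*E)ᵀ*(Q*E) = Eᵀ*(Q*E) := by
    rw [Matrix.transpose_mul, hsym, Matrix.mul_assoc, ← Matrix.mul_assoc Q Q E, hid]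
  have hQ2 : (Q*E)ᵀ*E = Eᵀ*(Q*E) := by
    rw [Matrix.transpose_mul, hsym, Matrix.mul_assoc]
  have key : (E - Q*E)ᵀ*(E - Q*E) = Eᵀ*E - (Q*E)ᵀ*(Q*E) := by
    rw [Matrix.transpose_sub, Matrix.sub_mul, Matrix.mul_sub, Matrix.mul_sub, hQ1, hQ2]
    abel
  rw [key, Matrix.trace_sub]

lemma sum_partition {m s : ℕ} (S : Fin s → Finset (Fin m))
    (hdisj : ∀ k l, k ≠ l → Disjoint (S k) (S l))
    (hcover : ∀ i, ∃ k, i ∈ S k) (g : Fin m → ℝ) :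
    ∑ k, ∑ i : {i // i ∈ S k}, g i = ∑ i, g i := by
  have h1 : ∀ k, (∑ i : {i // i ∈ S k}, g (i : Fin m)) = ∑ i ∈ S k, g i := fun k =>
    Finset.sum_coe_sort (S k) g
  simp_rw [h1]
  rw [← Finset.sum_biUnion (fun k _ l _ hkl => hdisj k l hkl)]
  congr 1
  ext i
  simpa using hcover i

lemma rowBlock_mul {m n q : ℕ} (A : Matrix (Fin m) (Fin n) ℝ) (B : Matrix (Fin n) (Fin q) ℝ)
    (U : Finset (Fin m)) : rowBlock (A * B) U = rowBlock A U * B := by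
  ext i j; simp [rowBlock, Matrix.mul_apply]

lemma frobSq_mul_le {α : Type*} [Fintype α] {n q : ℕ} (M : Matrix α (Fin n) ℝ) (β : ℝ)
    (h : ∀ v : Fin n → ℝ, (∑ i, (M.mulVec v i) ^ 2) ≤ β * ∑ j, (v j) ^ 2)
    (X : Matrix (Fin n) (Fin q) ℝ) : frobSq (M * X) ≤ β * frobSq X := by
  have h1 : frobSq (M * X) = ∑ j, ∑ i, (M.mulVec (fun r => X r j) i) ^ 2 := by
    rw [frobSq, Finset.sum_comm]; rfl
  have h2 : β * frobSq X = ∑ j : Fin q, β * ∑ r, (X r j) ^ 2 := by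
    rw [frobSq, Finset.sum_comm, Finset.mul_sum]
  rw [h1, h2]
  exact Finset.sum_le_sum fun j _ => h _

lemma sigMinSq_le {m n : ℕ} (A : Matrix (Fin m) (Fin n) ℝ) (v : Fin n → ℝ) :
    sigMinSq A * ∑ j, (v j) ^ 2 ≤ ∑ i, (A.mulVec v i) ^ 2 := by
  have hbdd : BddBelow {c : ℝ | ∃ v : Fin n → ℝ, (∑ j, (v j) ^ 2) = 1 ∧
      c = ∑ i, (A.mulVec v i) ^ 2} := by
    refine ⟨0, ?_⟩
    rintro c ⟨w, -, rfl⟩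
    positivity
  rcases eq_or_lt_of_le (show (0:ℝ) ≤ ∑ j, (v j)^2 by positivity) with hc | hc
  · rw [← hc, mul_zero]; positivity
  · set c : ℝ := ∑ j, (v j) ^ 2 with hcdef
    set t : ℝ := Real.sqrt c with htdef
    have ht : 0 < t := Real.sqrt_pos.2 hc
    have ht2 : t ^ 2 = c := Real.sq_sqrt hc.le
    have hmem : (∑ i, (A.mulVec (fun j => v j / t) i) ^ 2) ∈ {c : ℝ | ∃ v : Fin n → ℝ,
        (∑ j, (v j) ^ 2) = 1 ∧ c = ∑ i, (A.mulVec v i) ^ 2} := by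
      refine ⟨fun j => v j / t, ?_, rfl⟩
      have : (∑ j, (v j / t) ^ 2) = (∑ j, (v j) ^ 2) / t ^ 2 := by
        rw [Finset.sum_div]; congr 1; ext j; ring
      rw [this, ht2]
      field_simp
      exact hcdef.symm
    ring_nf
    have hle := csInf_le hbdd hmem
    have hmv : ∀ i, A.mulVec (fun j => v j / t) i = A.mulVec v i / t := by
      intro i
      simp only [Matrix.mulVec, dotProduct]
      rw [Finset.sum_div]
      congr 1; ext j; ring
    have hsum : (∑ i, (A.mulVec (fun j => v j / t) i) ^ 2)
        = (∑ i, (A.mulVec v i) ^ 2) / c := by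
      rw [← ht2, Finset.sum_div]
      refine Finset.sum_congr rfl fun i _ => ?_
      rw [hmv, div_pow]
    rw [hsum] at hle
    have := mul_le_mul_of_nonneg_right hle hc.le
    rw [div_mul_cancel₀] at this
    · exact this
    · exact hc.ne'

theorem stmt12 (m n q s : ℕ) (hs : 0 < s) (A : Matrix (Fin m) (Fin n) ℝ)
    (S : Fin s → Finset (Fin m))
    (hdisj : ∀ k l, k ≠ l → Disjoint (S k) (S l))
    (hcover : ∀ i, ∃ k, i ∈ S k)
    (βA : ℝ)
    (hpav : ∀ k (v : Fin n → ℝ),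
      (∑ i, ((rowBlock A (S k)).mulVec v i) ^ 2) ≤ βA * ∑ j, (v j) ^ 2)
    (hσ : 0 < sigMinSq A)
    (Y Ystar : Matrix (Fin n) (Fin q) ℝ) (F : Matrix (Fin m) (Fin q) ℝ) (hF : F = A * Ystar)
    (Z : Matrix (Fin m) (Fin q) ℝ) (hYZ : Y - Ystar = Aᵀ * Z)
    (P : ∀ k : Fin s, Matrix (Fin n) {i // i ∈ S k} ℝ)
    (hP : ∀ k, IsMPInv (rowBlock A (S k)) (P k)) :
    (1 / (s : ℝ)) * ∑ k,
        frobSq (Y + P k * (rowBlock F (S k) - rowBlock A (S k) * Y) - Ystar)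
      ≤ (1 - sigMinSq A / (s * βA)) * frobSq (Y - Ystar) := by
  have hs' : (0:ℝ) < s := by exact_mod_cast hs
  set E : Matrix (Fin n) (Fin q) ℝ := Y - Ystar with hEdef
  set Q : Fin s → Matrix (Fin n) (Fin n) ℝ := fun k => P k * rowBlock A (S k) with hQdef
  -- n > 0
  have hn : 0 < n := by
    rcases Nat.eq_zero_or_pos n with h0 | h
    · exfalso
      have hempty : {c : ℝ | ∃ v : Fin n → ℝ, (∑ j, (v j) ^ 2) = 1 ∧
          c = ∑ i, (A.mulVec v i) ^ 2} = ∅ := by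
        ext c
        simp only [Set.mem_setOf_eq, Set.mem_empty_iff_false, iff_false, not_exists]
        intro v hv
        subst h0
        simp at hv
      have : sigMinSq A = 0 := by rw [sigMinSq, hempty, Real.sInf_empty]
      linarith
    · exact h
  -- unit vector
  have hunit : ∃ v : Fin n → ℝ, (∑ j, (v j) ^ 2) = 1 := by
    refine ⟨fun j => if j = ⟨0, hn⟩ then 1 else 0, ?_⟩
    simp [apply_ite (fun x : ℝ => x ^ 2)]
  -- βA positivity
  have hβpos : 0 < βA := by
    obtain ⟨v, hv⟩ := hunit
    have h1 := sigMinSq_le A v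
    rw [hv, mul_one] at h1
    have h2 : (∑ i, (A.mulVec v i) ^ 2)
        = ∑ k, ∑ i : {i // i ∈ S k}, (A.mulVec v i) ^ 2 :=
      (sum_partition S hdisj hcover _).symm
    have h3 : ∀ k : Fin s, (∑ i : {i // i ∈ S k}, (A.mulVec v (i : Fin m)) ^ 2) ≤ βA := by
      intro k
      have := hpav k v
      rw [hv, mul_one] at this
      exact this
    have h4 : (∑ i, (A.mulVec v i) ^ 2) ≤ s * βA := by
      rw [h2]
      calc (∑ k, ∑ i : {i // i ∈ S k}, (A.mulVec v i) ^ 2) ≤ ∑ k : Fin s, βA :=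
            Finset.sum_le_sum fun k _ => h3 k
        _ = s * βA := by simp [mul_comm]
    nlinarith [hσ]
  -- Q is symmetric idempotent
  have hQsym : ∀ k, (Q k)ᵀ = Q k := fun k => (hP k).2.2.2
  have hQidem : ∀ k, Q k * Q k = Q k := by
    intro k
    show P k * rowBlock A (S k) * (P k * rowBlock A (S k)) = P k * rowBlock A (S k)
    rw [← Matrix.mul_assoc, (hP k).2.1]
  -- the update term
  have hterm : ∀ k, Y + P k * (rowBlock F (S k) - rowBlock A (S k) * Y) - Ystar
      = E - Q k * E := by
    intro k
    rw [hF, rowBlock_mul, ← Matrix.mul_sub, ← Matrix.mul_assoc]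
    have hsub : Ystar - Y = -(Y - Ystar) := by abel
    rw [hsub, Matrix.mul_neg]
    show Y + -(Q k * (Y - Ystar)) - Ystar = (Y - Ystar) - Q k * (Y - Ystar)
    abel
  -- key inequality: β * ∑ frobSq (Q k * E) ≥ frobSq (A * E)
  have hlowk : ∀ k, frobSq (rowBlock A (S k) * E) ≤ βA * frobSq (Q k * E) := by
    intro k
    have hME : rowBlock A (S k) * E = rowBlock A (S k) * (Q k * E) := by
      show _ = rowBlock A (S k) * (P k * rowBlock A (S k) * E)
      rw [← Matrix.mul_assoc, ← Matrix.mul_assoc, (hP k).1]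
    rw [hME]
    exact frobSq_mul_le _ βA (hpav k) _
  have hsumblocks : (∑ k, frobSq (rowBlock A (S k) * E)) = frobSq (A * E) := by
    have h1 : ∀ k : Fin s, frobSq (rowBlock A (S k) * E)
        = ∑ i : {i // i ∈ S k}, ∑ j, ((A * E) (i : Fin m) j) ^ 2 := by
      intro k
      rw [← rowBlock_mul]
      rfl
    simp_rw [h1]
    exact sum_partition S hdisj hcover (fun i => ∑ j, ((A * E) i j) ^ 2)
  have hAE : sigMinSq A * frobSq E ≤ frobSq (A * E) := by
    have h1 : frobSq (A * E) = ∑ j, ∑ i, (A.mulVec (fun r => E r j) i) ^ 2 := by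
      rw [frobSq, Finset.sum_comm]; rfl
    have h2 : sigMinSq A * frobSq E = ∑ j : Fin q, sigMinSq A * ∑ r, (E r j) ^ 2 := by
      rw [frobSq, Finset.sum_comm, Finset.mul_sum]
    rw [h1, h2]
    exact Finset.sum_le_sum fun j _ => sigMinSq_le A _
  set T : ℝ := ∑ k, frobSq (Q k * E) with hTdef
  have key : sigMinSq A * frobSq E ≤ βA * T := by
    calc sigMinSq A * frobSq E ≤ frobSq (A * E) := hAE
      _ = ∑ k, frobSq (rowBlock A (S k) * E) := hsumblocks.symm
      _ ≤ ∑ k, βA * frobSq (Q k * E) := Finset.sum_le_sum fun k _ => hlowk k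
      _ = βA * T := by rw [hTdef, Finset.mul_sum]
  have hsum2 : (∑ k, frobSq (Y + P k * (rowBlock F (S k) - rowBlock A (S k) * Y) - Ystar))
      = s * frobSq E - T := by
    have : ∀ k, frobSq (Y + P k * (rowBlock F (S k) - rowBlock A (S k) * Y) - Ystar)
        = frobSq E - frobSq (Q k * E) := by
      intro k
      rw [hterm k]
      exact frobSq_proj (Q k) (hQsym k) (hQidem k) E
    simp_rw [this]
    rw [Finset.sum_sub_distrib, Finset.sum_const, Finset.card_univ, Fintype.card_fin,
      nsmul_eq_mul, hTdef]
  rw [hsum2]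
  have h3 : (1 / (s:ℝ)) * (s * frobSq E - T) = frobSq E - T / s := by
    field_simp
  have h4 : (1 - sigMinSq A / (s * βA)) * frobSq E
      = frobSq E - (sigMinSq A * frobSq E) / (s * βA) := by ring
  rw [h3, h4]
  have h5 : (sigMinSq A * frobSq E) / ((s:ℝ) * βA) ≤ T / s := by
    rw [div_le_div_iff₀ (by positivity) hs']
    nlinarith [mul_le_mul_of_nonneg_right key hs'.le]
  linarith
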